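/- arXiv:2007.09491 — 3 statements merged into one kernel-verified Lean document; each statement's English description precedes it below -/
import Mathlib

section
/- η(t) = t²·u²(t) − v(t) tends to +∞ as t → ∞, where u(t) = (t-1)/(t·log t) and v(t) = ∫₀ᵗ τ·u²(τ) dτ. -/
open Real MeasureTheory Filter Set

/-- u(t) = (t-1)/(t·log t) with the removable singularity u(1) = 1. -/
noncomputable def u (t : ℝ) : ℝ := if t = 1 then 1 else (t - 1) / (t * Real.log t)

/-- v(t) = ∫₀ᵗ τ·u(τ)² dτ. -/
noncomputable def v (t : ℝ) : ℝ := ∫ τ in Set.Ioo (0:ℝ) t, τ * u τ ^ 2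

lemma measurable_u : Measurable u := by
  unfold u
  exact Measurable.ite (measurableSet_singleton 1) measurable_const
    ((measurable_id.sub measurable_const).div (measurable_id.mul Real.measurable_log))

lemma measurable_f : Measurable (fun τ : ℝ => τ * u τ ^ 2) :=
  measurable_id.mul ((measurable_u.pow measurable_const))

lemma u_nonneg {t : ℝ} (ht : 0 < t) : 0 ≤ u t := by
  unfold u
  rcases eq_or_ne t 1 with h | h
  · simp [h]
  rw [if_neg h]
  rcases lt_or_gt_of_ne h with h1 | h1
  · rw [div_nonneg_iff]
    exact Or.inr ⟨by linarith, mul_nonpos_of_nonneg_of_nonpos ht.le (Real.log_nonpos ht.le h1.le)⟩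
  · apply div_nonneg (by linarith)
    exact le_of_lt (mul_pos ht (Real.log_pos h1))

lemma u_le_one {t : ℝ} (ht : 1 ≤ t) : u t ≤ 1 := by
  unfold u
  rcases eq_or_lt_of_le ht with h | h
  · simp [← h]
  have ht0 : (0:ℝ) < t := by linarith
  rw [if_neg h.ne']
  rw [div_le_one (mul_pos ht0 (Real.log_pos h))]
  have h2 := Real.log_le_sub_one_of_pos (inv_pos.mpr ht0)
  rw [Real.log_inv] at h2
  have h3 : t * (1 - t⁻¹) ≤ t * Real.log t :=
    mul_le_mul_of_nonneg_left (by linarith) ht0.le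
  have h4 : t * t⁻¹ = 1 := mul_inv_cancel₀ ht0.ne'
  nlinarith

lemma u_le_two {t : ℝ} (ht : 1/2 ≤ t) : u t ≤ 2 := by
  rcases le_or_gt 1 t with h | h
  · linarith [u_le_one h]
  have ht0 : (0:ℝ) < t := by linarith
  have hlog : Real.log t < 0 := Real.log_neg ht0 h
  unfold u
  rw [if_neg h.ne]
  rw [div_le_iff_of_neg (mul_neg_of_pos_of_neg ht0 hlog)]
  have h1 := Real.log_le_sub_one_of_pos ht0
  nlinarith

lemma u_le_inv_log {t : ℝ} (ht : 1 < t) : u t ≤ (Real.log t)⁻¹ := by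
  have ht0 : (0:ℝ) < t := by linarith
  have hlog : 0 < Real.log t := Real.log_pos ht
  unfold u
  rw [if_neg ht.ne']
  rw [div_le_iff₀ (mul_pos ht0 hlog)]
  have : (Real.log t)⁻¹ * (t * Real.log t) = t := by
    field_simp
  rw [this]; linarith

lemma f_eq {t : ℝ} (h0 : 0 < t) (h1 : t ≠ 1) :
    t * u t ^ 2 = (t - 1) ^ 2 / (t * Real.log t ^ 2) := by
  have hlog : Real.log t ≠ 0 := Real.log_ne_zero_of_pos_of_ne_one h0 h1
  unfold u
  rw [if_neg h1]
  field_simp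

lemma int0 : IntegrableOn (fun τ : ℝ => τ * u τ ^ 2) (Set.Ioo 0 (1/2)) := by
  have key : IntegrableOn (fun x : ℝ => (x * Real.log x ^ 2)⁻¹) (Set.Ioc 0 (1/2)) := by
    apply intervalIntegral.integrableOn_deriv_of_nonneg
      (g := fun x : ℝ => -(Real.log x)⁻¹)
    · intro x hx
      rcases eq_or_lt_of_le hx.1 with h0 | h0
      · have h0 : x = 0 := h0.symm
        subst h0
        have hicc : Set.Icc (0:ℝ) (1/2) = insert 0 (Set.Ioc 0 (1/2)) := by
          ext y
          simp only [Set.mem_Icc, Set.mem_insert_iff, Set.mem_Ioc]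
          constructor
          · rintro ⟨h1, h2⟩
            rcases eq_or_lt_of_le h1 with h | h
            · exact Or.inl h.symm
            · exact Or.inr ⟨h, h2⟩
          · rintro (h | ⟨h1, h2⟩)
            · exact ⟨le_of_eq h.symm, by norm_num [h]⟩
            · exact ⟨h1.le, h2⟩
        rw [hicc]
        apply ContinuousWithinAt.insert
        have hlim : Tendsto (fun x : ℝ => -(Real.log x)⁻¹) (nhdsWithin 0 (Set.Ioi 0)) (nhds 0) := by
          have h1 : Tendsto (fun x : ℝ => -Real.log x) (nhdsWithin 0 (Set.Ioi 0)) atTop :=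
            tendsto_neg_atBot_atTop.comp Real.tendsto_log_nhdsGT_zero
          have h2 := h1.inv_tendsto_atTop
          refine h2.congr fun x => ?_
          simp [Pi.inv_apply, inv_neg]
        rw [ContinuousWithinAt]
        have h0 : -(Real.log (0:ℝ))⁻¹ = 0 := by simp
        rw [h0]
        exact hlim.mono_left (nhdsWithin_mono _ Set.Ioc_subset_Ioi_self)
      · have hlog : Real.log x ≠ 0 := by
          have : Real.log x < 0 := Real.log_neg h0 (by linarith [hx.2])
          exact this.ne
        exact (((Real.continuousAt_log h0.ne').inv₀ hlog).neg).continuousWithinAt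
    · intro x hx
      have hx0 : (0:ℝ) < x := hx.1
      have hlog : Real.log x ≠ 0 := (Real.log_neg hx0 (by linarith [hx.2])).ne
      have h1 : HasDerivAt Real.log x⁻¹ x := Real.hasDerivAt_log hx0.ne'
      have h2 := (h1.inv hlog).neg
      convert h2 using 1
      · rfl
      · rfl
      · rfl
      · rw [neg_div, neg_neg, div_eq_mul_inv, mul_inv]
    · intro x hx
      have hx0 : (0:ℝ) < x := hx.1
      have hlog : Real.log x ≠ 0 := (Real.log_neg hx0 (by linarith [hx.2])).ne
      have : 0 < x * Real.log x ^ 2 := by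
        apply mul_pos hx0
        rw [← sq_abs]
        exact pow_pos (abs_pos.mpr hlog) 2
      positivity
  apply Integrable.mono' (key.mono_set Set.Ioo_subset_Ioc_self)
    (measurable_f.aestronglyMeasurable.restrict)
  rw [ae_restrict_iff' measurableSet_Ioo]
  filter_upwards with τ
  rintro ⟨h0, h1⟩
  have hne : τ ≠ 1 := by linarith
  have hlog : Real.log τ ≠ 0 := (Real.log_neg h0 (by linarith)).ne
  have hD : 0 < τ * Real.log τ ^ 2 := by
    apply mul_pos h0
    rw [← sq_abs]
    exact pow_pos (abs_pos.mpr hlog) 2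
  have hnn : 0 ≤ τ * u τ ^ 2 := mul_nonneg h0.le (sq_nonneg _)
  have hnum : (τ - 1) ^ 2 ≤ 1 := by nlinarith
  rw [Real.norm_of_nonneg hnn, f_eq h0 hne, inv_eq_one_div, div_le_div_iff₀ hD hD]
  nlinarith [mul_le_mul_of_nonneg_right hnum hD.le]

lemma intIcc (b : ℝ) : IntegrableOn (fun τ : ℝ => τ * u τ ^ 2) (Set.Icc (1/2) b) := by
  apply Measure.integrableOn_of_bounded (M := 4 * |b|) measure_Icc_lt_top.ne
    measurable_f.aestronglyMeasurable
  rw [ae_restrict_iff' measurableSet_Icc]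
  filter_upwards with τ
  rintro ⟨hl, hr⟩
  have h0 : (0:ℝ) < τ := by linarith
  have hu2 := u_le_two hl
  have hu0 := u_nonneg h0
  have hb := le_abs_self b
  have hnn : 0 ≤ τ * u τ ^ 2 := mul_nonneg h0.le (sq_nonneg _)
  rw [Real.norm_of_nonneg hnn]
  have h4 : u τ ^ 2 ≤ 4 := by nlinarith
  nlinarith [mul_le_mul_of_nonneg_left h4 h0.le]

lemma intSub {s : Set ℝ} {b : ℝ}
    (hs : s ⊆ Set.Ioo 0 (1/2) ∪ Set.Icc (1/2) b) :
    IntegrableOn (fun τ : ℝ => τ * u τ ^ 2) s :=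
  (int0.union (intIcc b)).mono_set hs

theorem eta_tendsto_atTop :
    Filter.Tendsto (fun t => t ^ 2 * u t ^ 2 - v t) Filter.atTop Filter.atTop := by
  obtain ⟨C, hC⟩ : ∃ C : ℝ, C = ∫ τ in Set.Ioo (0:ℝ) 1, τ * u τ ^ 2 := ⟨_, rfl⟩
  have hg : Tendsto (fun t : ℝ =>
      (t ^ ((4:ℝ)/5)) ^ 2 * (25/256 * (t ^ ((2:ℝ)/5) / Real.log t ^ 2) - 1/2) - C)
      atTop atTop := by
    have hA : Tendsto (fun t : ℝ => (t ^ ((4:ℝ)/5)) ^ 2) atTop atTop :=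
      (tendsto_pow_atTop two_ne_zero).comp (tendsto_rpow_atTop (by norm_num))
    have hB : Tendsto (fun t : ℝ => t ^ ((2:ℝ)/5) / Real.log t ^ 2) atTop atTop := by
      have h1 : (fun t : ℝ => Real.log t ^ 2) =o[atTop]
          (fun t : ℝ => (t ^ ((1:ℝ)/5)) ^ 2) :=
        (isLittleO_log_rpow_atTop (by norm_num)).pow (show 0 < 2 by norm_num)
      have h2 := h1.tendsto_div_nhds_zero
      have h3 : Tendsto (fun t : ℝ => Real.log t ^ 2 / (t ^ ((1:ℝ)/5)) ^ 2) atTop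
          (nhdsWithin 0 (Set.Ioi 0)) := by
        rw [tendsto_nhdsWithin_iff]
        refine ⟨h2, ?_⟩
        filter_upwards [eventually_gt_atTop (1:ℝ)] with t ht
        have hlog : 0 < Real.log t := Real.log_pos ht
        have hr : 0 < t ^ ((1:ℝ)/5) := Real.rpow_pos_of_pos (by linarith) _
        exact div_pos (pow_pos hlog 2) (pow_pos hr 2)
      have h4 := h3.inv_tendsto_nhdsGT_zero
      refine h4.congr' ?_
      filter_upwards [eventually_gt_atTop (0:ℝ)] with t ht
      have hrw : (t ^ ((1:ℝ)/5)) ^ 2 = t ^ ((2:ℝ)/5) := by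
        rw [← Real.rpow_natCast (t ^ ((1:ℝ)/5)) 2, ← Real.rpow_mul ht.le]
        norm_num
      simp only [Pi.inv_apply, inv_div, hrw]
    have hB2 : Tendsto (fun t : ℝ =>
        25/256 * (t ^ ((2:ℝ)/5) / Real.log t ^ 2) - 1/2) atTop atTop := by
      have h5 := (tendsto_const_mul_atTop_of_pos (show (0:ℝ) < 25/256 by norm_num)).mpr hB
      have h6 := tendsto_atTop_add_const_right atTop (-(1/2 : ℝ)) h5
      refine h6.congr fun t => ?_
      ring
    have h7 := tendsto_atTop_add_const_right atTop (-C) (hA.atTop_mul_atTop₀ hB2)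
    refine h7.congr fun t => ?_
    ring
  apply tendsto_atTop_mono' atTop ?_ hg
  filter_upwards [eventually_ge_atTop (16:ℝ)] with t ht
  -- setup
  have ht0 : (0:ℝ) < t := by linarith
  have ht1 : (1:ℝ) < t := by linarith
  have hlogt : 0 < Real.log t := Real.log_pos ht1
  obtain ⟨a, ha⟩ : ∃ a : ℝ, a = t ^ ((4:ℝ)/5) := ⟨_, rfl⟩
  have ha1 : 1 < a := by
    rw [ha]
    exact Real.one_lt_rpow_iff_of_pos ht0 |>.mpr (Or.inl ⟨ht1, by norm_num⟩)
  have hat : a ≤ t := by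
    rw [ha]
    calc t ^ ((4:ℝ)/5) ≤ t ^ ((1:ℝ)) := Real.rpow_le_rpow_of_exponent_le ht1.le (by norm_num)
    _ = t := Real.rpow_one t
  have hloga : Real.log a = 4/5 * Real.log t := by rw [ha]; exact Real.log_rpow ht0 _
  -- integrability of the pieces
  have hsub : ∀ s : Set ℝ, s ⊆ Set.Ioo 0 t → IntegrableOn (fun τ : ℝ => τ * u τ ^ 2) s := by
    intro s hs
    apply intSub (b := t)
    intro x hx
    rcases lt_or_ge x (1/2) with h | h
    · exact Or.inl ⟨(hs hx).1, h⟩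
    · exact Or.inr ⟨h, (hs hx).2.le⟩
  have hI01 : IntegrableOn (fun τ : ℝ => τ * u τ ^ 2) (Set.Ioo 0 1) :=
    hsub _ (Set.Ioo_subset_Ioo le_rfl ht1.le)
  have hI1a : IntegrableOn (fun τ : ℝ => τ * u τ ^ 2) (Set.Ico 1 a) := by
    apply hsub
    intro x hx
    exact ⟨by linarith [hx.1], lt_of_lt_of_le hx.2 hat⟩
  have hIat : IntegrableOn (fun τ : ℝ => τ * u τ ^ 2) (Set.Ico a t) := by
    apply hsub
    intro x hx
    exact ⟨by linarith [hx.1], hx.2⟩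
  have hI1t : IntegrableOn (fun τ : ℝ => τ * u τ ^ 2) (Set.Ico 1 t) := by
    apply hsub
    intro x hx
    exact ⟨by linarith [hx.1], hx.2⟩
  -- split the integral
  have hd1 : Disjoint (Set.Ioo (0:ℝ) 1) (Set.Ico 1 t) := by
    rw [Set.disjoint_left]
    rintro x ⟨_, h1⟩ ⟨h2, _⟩
    linarith
  have hd2 : Disjoint (Set.Ico (1:ℝ) a) (Set.Ico a t) := by
    rw [Set.disjoint_left]
    rintro x ⟨_, h1⟩ ⟨h2, _⟩
    linarith
  have hsplit1 : Set.Ioo (0:ℝ) t = Set.Ioo 0 1 ∪ Set.Ico 1 t :=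
    (Set.Ioo_union_Ico_eq_Ioo (by norm_num) ht1.le).symm
  have hsplit2 : Set.Ico (1:ℝ) t = Set.Ico 1 a ∪ Set.Ico a t :=
    (Set.Ico_union_Ico_eq_Ico ha1.le hat).symm
  have hv : v t = C + (∫ τ in Set.Ico (1:ℝ) a, τ * u τ ^ 2)
      + ∫ τ in Set.Ico a t, τ * u τ ^ 2 := by
    rw [v, hsplit1, setIntegral_union hd1 measurableSet_Ico hI01 hI1t, hsplit2,
      setIntegral_union hd2 measurableSet_Ico hI1a hIat, ← hC, add_assoc]
  -- bound the middle integral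
  have hB1 : (∫ τ in Set.Ico (1:ℝ) a, τ * u τ ^ 2) ≤ a ^ 2 / 2 := by
    have hmono : (∫ τ in Set.Ico (1:ℝ) a, τ * u τ ^ 2) ≤ ∫ τ in Set.Ico (1:ℝ) a, τ := by
      apply setIntegral_mono_on hI1a
        ((continuous_id'.integrableOn_Icc).mono_set Set.Ico_subset_Icc_self) measurableSet_Ico
      intro x hx
      have hx1 : (1:ℝ) ≤ x := hx.1
      have hu1 := u_le_one hx1
      have hu0 := u_nonneg (by linarith : (0:ℝ) < x)
      have h4 : u x ^ 2 ≤ 1 := by nlinarith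
      nlinarith [mul_le_mul_of_nonneg_left h4 (by linarith : (0:ℝ) ≤ x)]
    have hval : (∫ τ in Set.Ico (1:ℝ) a, τ) = (a ^ 2 - 1 ^ 2) / 2 := by
      rw [MeasureTheory.integral_Ico_eq_integral_Ioo,
        ← MeasureTheory.integral_Ioc_eq_integral_Ioo,
        ← intervalIntegral.integral_of_le ha1.le, integral_id]
    rw [hval] at hmono
    nlinarith
  -- bound the outer integral
  have hB2 : (∫ τ in Set.Ico a t, τ * u τ ^ 2) ≤ 25/(16 * Real.log t ^ 2) * (t ^ 2 / 2) := by
    have hmono : (∫ τ in Set.Ico a t, τ * u τ ^ 2)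
        ≤ ∫ τ in Set.Ico a t, 25/(16 * Real.log t ^ 2) * τ := by
      apply setIntegral_mono_on hIat
        (((continuous_const.mul continuous_id').integrableOn_Icc).mono_set
          Set.Ico_subset_Icc_self) measurableSet_Ico
      intro x hx
      have hx1 : (1:ℝ) < x := lt_of_lt_of_le ha1 hx.1
      have hx0 : (0:ℝ) < x := by linarith
      have hlogx : 0 < Real.log x := Real.log_pos hx1
      have hloga' : Real.log a ≤ Real.log x := Real.log_le_log (by linarith [ha1]) hx.1
      have hu := u_le_inv_log hx1
      have hu0 := u_nonneg hx0
      have hinv : (Real.log x)⁻¹ ≤ (4/5 * Real.log t)⁻¹ := by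
        apply inv_anti₀
        · rw [← hloga]; rw [hloga]; positivity
        · rw [← hloga, hloga]; linarith [hloga ▸ hloga']
      have hu' : u x ≤ (4/5 * Real.log t)⁻¹ := hu.trans hinv
      have hsq : u x ^ 2 ≤ ((4/5 * Real.log t)⁻¹) ^ 2 := by nlinarith
      have hval : ((4/5 * Real.log t)⁻¹) ^ 2 = 25/(16 * Real.log t ^ 2) := by
        rw [← one_div]
        field_simp
        ring
      calc x * u x ^ 2 ≤ x * ((4/5 * Real.log t)⁻¹) ^ 2 :=
            mul_le_mul_of_nonneg_left hsq hx0.le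
        _ = 25/(16 * Real.log t ^ 2) * x := by rw [hval]; ring
    have hval : (∫ τ in Set.Ico a t, 25/(16 * Real.log t ^ 2) * τ)
        = 25/(16 * Real.log t ^ 2) * ((t ^ 2 - a ^ 2) / 2) := by
      rw [MeasureTheory.integral_Ico_eq_integral_Ioo,
        ← MeasureTheory.integral_Ioc_eq_integral_Ioo,
        ← intervalIntegral.integral_of_le hat, intervalIntegral.integral_const_mul, integral_id]
    rw [hval] at hmono
    have hc : 0 ≤ 25/(16 * Real.log t ^ 2) := by positivity
    have ha0 : 0 ≤ a ^ 2 := sq_nonneg a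
    nlinarith
  -- the main term
  have hmain : t ^ 2 * u t ^ 2 = (t - 1) ^ 2 / Real.log t ^ 2 := by
    have hut : u t = (t - 1) / (t * Real.log t) := by unfold u; rw [if_neg ht1.ne']
    rw [hut]
    field_simp
  have hnum : 225/256 * t ^ 2 ≤ (t - 1) ^ 2 := by nlinarith
  have h3 : 225/256 * (t ^ 2 / Real.log t ^ 2) ≤ (t - 1) ^ 2 / Real.log t ^ 2 := by
    have h := (div_le_div_iff_of_pos_right (pow_pos hlogt 2)).mpr hnum
    calc 225/256 * (t ^ 2 / Real.log t ^ 2) = (225/256 * t ^ 2) / Real.log t ^ 2 := by ring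
      _ ≤ (t - 1) ^ 2 / Real.log t ^ 2 := h
  have h4 : 25/(16 * Real.log t ^ 2) * (t ^ 2 / 2) = 200/256 * (t ^ 2 / Real.log t ^ 2) := by
    field_simp
    ring
  have hkey : (t ^ ((4:ℝ)/5)) ^ 2 * t ^ ((2:ℝ)/5) = t ^ 2 := by
    rw [← Real.rpow_natCast (t ^ ((4:ℝ)/5)) 2, ← Real.rpow_mul ht0.le, ← Real.rpow_add ht0,
      ← Real.rpow_natCast t 2]
    norm_num
  have h6 : (t ^ ((4:ℝ)/5)) ^ 2 * (t ^ ((2:ℝ)/5) / Real.log t ^ 2)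
      = t ^ 2 / Real.log t ^ 2 := by
    rw [← mul_div_assoc, hkey]
  have hg_eq : (t ^ ((4:ℝ)/5)) ^ 2 * (25/256 * (t ^ ((2:ℝ)/5) / Real.log t ^ 2) - 1/2) - C
      = 25/256 * (t ^ 2 / Real.log t ^ 2) - a ^ 2 / 2 - C := by
    rw [ha]
    linear_combination (25/256 : ℝ) * h6
  rw [hg_eq]
  linarith [hv.ge, hB1, hB2, hmain, h3, h4]
end

section
/- The function log u(|z|²) with u(t) = (t−1)/(t·log t) is subharmonic on ℂ \ {0}; equivalently, for all t ∈ (0,∞), u(t)u'(t) + t(u(t)u''(t) − u'(t)²) ≥ 0. -/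
open Real MeasureTheory Filter Set

/-- The kernel `E t s = exp (-(log t) * s) = t ^ (-s)`. -/
noncomputable def EE (t s : ℝ) : ℝ := Real.exp (-(Real.log t) * s)

lemma EE_cont (t : ℝ) : Continuous (EE t) := by
  unfold EE; fun_prop

lemma EE_nonneg (t s : ℝ) : 0 ≤ EE t s := (Real.exp_pos _).le

lemma EE_le {t x s : ℝ} (ht : 0 < t) (hx : t/2 < x) (hs0 : 0 ≤ s) (hs1 : s ≤ 1) :
    EE x s ≤ max 1 (2/t) := by
  have hx0 : 0 < x := lt_of_le_of_lt (by positivity) hx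
  rcases le_or_gt 1 x with h1 | h1
  · have hle : -(Real.log x) * s ≤ 0 :=
      mul_nonpos_of_nonpos_of_nonneg (neg_nonpos.2 (Real.log_nonneg h1)) hs0
    exact le_trans (Real.exp_le_one_iff.2 hle) (le_max_left _ _)
  · have hlog : Real.log x < 0 := Real.log_neg hx0 h1
    have h2 : -(Real.log x) * s ≤ -(Real.log x) := by
      nlinarith
    have h3 : EE x s ≤ Real.exp (-(Real.log x)) := Real.exp_le_exp.2 h2
    have h4 : Real.exp (-(Real.log x)) = x⁻¹ := by
      rw [Real.exp_neg, Real.exp_log hx0]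
    have h5 : x⁻¹ ≤ 2/t := by
      rw [inv_le_iff_one_le_mul₀ hx0, div_mul_eq_mul_div, le_div_iff₀ (by positivity)]
      nlinarith
    calc EE x s ≤ x⁻¹ := h4 ▸ h3
      _ ≤ 2/t := h5
      _ ≤ max 1 (2/t) := le_max_right _ _

/-- Integral representation of `u`. -/
lemma u_eq {t : ℝ} (ht : 0 < t) : u t = ∫ s in (0:ℝ)..1, EE t s := by
  unfold u EE
  rcases eq_or_ne t 1 with rfl | hne
  · simp
  · have hL : Real.log t ≠ 0 := Real.log_ne_zero_of_pos_of_ne_one ht hne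
    rw [if_neg hne]
    have h := intervalIntegral.integral_comp_mul_left (a := 0) (b := 1)
      (c := -(Real.log t)) Real.exp (by simpa using hL)
    rw [h]
    simp only [mul_zero, mul_one, integral_exp, smul_eq_mul, Real.exp_zero]
    rw [Real.exp_neg, Real.exp_log ht]
    field_simp
    ring

lemma hasDerivAt_EE {s : ℝ} {x : ℝ} (hx : 0 < x) :
    HasDerivAt (fun y => EE y s) (-(s/x) * EE x s) x := by
  have h1 : HasDerivAt (fun y => -(Real.log y) * s) (-x⁻¹ * s) x :=
    ((Real.hasDerivAt_log hx.ne').neg.mul_const s)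
  have h2 := h1.exp
  convert h2 using 1
  all_goals (unfold EE; ring)

lemma hasDerivAt_EE1 {s : ℝ} {x : ℝ} (hx : 0 < x) :
    HasDerivAt (fun y => -(s/y) * EE y s) (((s + s^2)/x^2) * EE x s) x := by
  have h1 : HasDerivAt (fun y : ℝ => -(s/y)) (s/x^2) x := by
    have := ((hasDerivAt_inv hx.ne').const_mul s).neg
    convert this using 1
    · rfl
    · rfl
    · rfl
    · ring
  have h2 := h1.mul (hasDerivAt_EE hx (s := s))
  convert h2 using 1
  · rfl
  · rfl
  · rfl
  · ring

/-- First differentiation under the integral sign. -/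
lemma hasDerivAt_int1 {t : ℝ} (ht : 0 < t) :
    HasDerivAt (fun x => ∫ s in (0:ℝ)..1, EE x s)
      (∫ s in (0:ℝ)..1, -(s/t) * EE t s) t := by
  have hmem : ∀ {x : ℝ}, x ∈ Metric.ball t (t/2) → t/2 < x := by
    intro x hx
    have := abs_lt.1 (by simpa [Real.dist_eq] using hx)
    linarith [this.1]
  have := (intervalIntegral.hasDerivAt_integral_of_dominated_loc_of_deriv_le
    (F := fun x s => EE x s) (F' := fun x s => -(s/x) * EE x s)
    (a := 0) (b := 1) (x₀ := t) (μ := volume) (bound := fun _ => (2/t) * max 1 (2/t))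
    (Metric.ball_mem_nhds t (show (0:ℝ) < t/2 by positivity))
    (Eventually.of_forall fun x => (EE_cont x).aestronglyMeasurable.restrict)
    ((EE_cont t).intervalIntegrable 0 1)
    ((by unfold EE; fun_prop : Continuous fun s => -(s/t) * EE t s)).aestronglyMeasurable.restrict
    ?_ (intervalIntegrable_const) ?_)
  · exact this.2
  · refine Eventually.of_forall fun s hs x hx => ?_
    rw [Set.uIoc_of_le (by norm_num : (0:ℝ) ≤ 1)] at hs
    have hxt : t/2 < x := hmem hx
    have hx0 : 0 < x := lt_of_le_of_lt (by positivity) hxt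
    have hE := EE_le ht hxt hs.1.le hs.2
    have hsx : |(-(s/x))| ≤ 2/t := by
      rw [abs_neg, abs_div, abs_of_nonneg hs.1.le, abs_of_nonneg hx0.le]
      rw [div_le_div_iff₀ hx0 ht]
      nlinarith [hs.2, hxt]
    calc ‖-(s/x) * EE x s‖ = |(-(s/x))| * |EE x s| := abs_mul _ _
      _ ≤ (2/t) * max 1 (2/t) := by
          apply mul_le_mul hsx _ (abs_nonneg _) (by positivity)
          rwa [abs_of_nonneg (EE_nonneg x s)]
  · refine Eventually.of_forall fun s hs x hx => ?_
    have hxt : t/2 < x := hmem hx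
    exact hasDerivAt_EE (lt_of_le_of_lt (by positivity) hxt)

/-- Second differentiation under the integral sign. -/
lemma hasDerivAt_int2 {t : ℝ} (ht : 0 < t) :
    HasDerivAt (fun x => ∫ s in (0:ℝ)..1, -(s/x) * EE x s)
      (∫ s in (0:ℝ)..1, ((s + s^2)/t^2) * EE t s) t := by
  have hmem : ∀ {x : ℝ}, x ∈ Metric.ball t (t/2) → t/2 < x := by
    intro x hx
    have := abs_lt.1 (by simpa [Real.dist_eq] using hx)
    linarith [this.1]
  have := (intervalIntegral.hasDerivAt_integral_of_dominated_loc_of_deriv_le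
    (F := fun x s => -(s/x) * EE x s) (F' := fun x s => ((s + s^2)/x^2) * EE x s)
    (a := 0) (b := 1) (x₀ := t) (μ := volume) (bound := fun _ => (2 * (2/t)^2) * max 1 (2/t))
    (Metric.ball_mem_nhds t (show (0:ℝ) < t/2 by positivity))
    ?_
    ((by unfold EE; fun_prop : Continuous fun s => -(s/t) * EE t s).intervalIntegrable 0 1)
    ((by unfold EE; fun_prop : Continuous fun s => ((s + s^2)/t^2) * EE t s)).aestronglyMeasurable.restrict
    ?_ (intervalIntegrable_const) ?_)
  · exact this.2
  · exact Eventually.of_forall fun x =>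
      (by unfold EE; fun_prop : Continuous fun s => -(s/x) * EE x s).aestronglyMeasurable.restrict
  · refine Eventually.of_forall fun s hs x hx => ?_
    rw [Set.uIoc_of_le (by norm_num : (0:ℝ) ≤ 1)] at hs
    have hxt : t/2 < x := hmem hx
    have hx0 : 0 < x := lt_of_le_of_lt (by positivity) hxt
    have hE := EE_le ht hxt hs.1.le hs.2
    have hsx : |((s + s^2)/x^2)| ≤ 2 * (2/t)^2 := by
      rw [abs_div, abs_of_nonneg (by nlinarith [hs.1.le] : (0:ℝ) ≤ s + s^2),
        abs_of_nonneg (by positivity : (0:ℝ) ≤ x^2)]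
      rw [div_le_iff₀ (by positivity)]
      have h1 : s + s^2 ≤ 2 := by nlinarith [hs.2, hs.1.le]
      have h2 : (t/2)^2 ≤ x^2 := by nlinarith
      calc s + s^2 ≤ 2 := h1
        _ ≤ 2 * (2/t)^2 * (t/2)^2 := by
            rw [show (2:ℝ) * (2/t)^2 * (t/2)^2 = 2 * ((2/t) * (t/2))^2 by ring,
              show (2/t) * (t/2) = 1 by field_simp]
            norm_num
        _ ≤ 2 * (2/t)^2 * x^2 := by
            apply mul_le_mul_of_nonneg_left h2 (by positivity)
    calc ‖((s + s^2)/x^2) * EE x s‖ = |((s + s^2)/x^2)| * |EE x s| := abs_mul _ _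
      _ ≤ (2 * (2/t)^2) * max 1 (2/t) := by
          apply mul_le_mul hsx _ (abs_nonneg _) (by positivity)
          rwa [abs_of_nonneg (EE_nonneg x s)]
  · refine Eventually.of_forall fun s hs x hx => ?_
    have hxt : t/2 < x := hmem hx
    exact hasDerivAt_EE1 (lt_of_le_of_lt (by positivity) hxt)

theorem log_u_subharmonic :
    ∀ t : ℝ, 0 < t →
      0 ≤ u t * deriv u t + t * (u t * deriv (deriv u) t - (deriv u t) ^ 2) := by
  intro t ht
  -- the three moments
  set A := ∫ s in (0:ℝ)..1, EE t s with hA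
  set B := ∫ s in (0:ℝ)..1, s * EE t s with hB
  set C := ∫ s in (0:ℝ)..1, s^2 * EE t s with hC
  have hiE : IntervalIntegrable (fun s => EE t s) volume 0 1 :=
    (EE_cont t).intervalIntegrable 0 1
  have hiB : IntervalIntegrable (fun s => s * EE t s) volume 0 1 :=
    (by unfold EE; fun_prop : Continuous fun s => s * EE t s).intervalIntegrable 0 1
  have hiC : IntervalIntegrable (fun s => s^2 * EE t s) volume 0 1 :=
    (by unfold EE; fun_prop : Continuous fun s => s^2 * EE t s).intervalIntegrable 0 1
  -- deriv u on (0,∞)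
  have hderiv1 : ∀ x : ℝ, 0 < x → deriv u x = ∫ s in (0:ℝ)..1, -(s/x) * EE x s := by
    intro x hx
    have heq : u =ᶠ[nhds x] fun y => ∫ s in (0:ℝ)..1, EE y s :=
      eventually_of_mem (Ioi_mem_nhds hx) fun y hy => u_eq hy
    rw [heq.deriv_eq]
    exact (hasDerivAt_int1 hx).deriv
  have hd1 : deriv u t = -(1/t) * B := by
    rw [hderiv1 t ht]
    have h1 : ∫ s in (0:ℝ)..1, -(s/t) * EE t s
        = ∫ s in (0:ℝ)..1, -(1/t) * (s * EE t s) := by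
      congr 1; funext s; ring
    rw [h1, intervalIntegral.integral_const_mul, ← hB]
  have hd2 : deriv (deriv u) t = (1/t^2) * (B + C) := by
    have heq : deriv u =ᶠ[nhds t] fun x => ∫ s in (0:ℝ)..1, -(s/x) * EE x s :=
      eventually_of_mem (Ioi_mem_nhds ht) fun y hy => hderiv1 y hy
    rw [heq.deriv_eq, (hasDerivAt_int2 ht).deriv]
    have h1 : ∫ s in (0:ℝ)..1, ((s + s^2)/t^2) * EE t s
        = ∫ s in (0:ℝ)..1, ((1/t^2) * (s * EE t s) + (1/t^2) * (s^2 * EE t s)) := by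
      congr 1; funext s; ring
    rw [h1, intervalIntegral.integral_add (hiB.const_mul _) (hiC.const_mul _),
      intervalIntegral.integral_const_mul, intervalIntegral.integral_const_mul, ← hB, ← hC]
    ring
  -- Cauchy–Schwarz: B^2 ≤ A*C
  have key : B^2 ≤ A * C := by
    have inner_nonneg : ∀ s : ℝ, 0 ≤ EE t s * (s^2 * A - 2*s*B + C) := by
      intro s
      apply mul_nonneg (EE_nonneg t s)
      have key2 : ∫ r in (0:ℝ)..1, EE t r * (s - r)^2 = s^2 * A - 2*s*B + C := by
        have h1 : ∫ r in (0:ℝ)..1, EE t r * (s - r)^2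
            = ∫ r in (0:ℝ)..1, (s^2 * EE t r - (2*s) * (r * EE t r) + r^2 * EE t r) := by
          congr 1; funext r; ring
        rw [h1, intervalIntegral.integral_add ((hiE.const_mul _).sub (hiB.const_mul _)) hiC,
          intervalIntegral.integral_sub (hiE.const_mul _) (hiB.const_mul _),
          intervalIntegral.integral_const_mul, intervalIntegral.integral_const_mul,
          ← hA, ← hB, ← hC]
      rw [← key2]
      apply intervalIntegral.integral_nonneg (by norm_num)
      intro r _
      exact mul_nonneg (EE_nonneg t r) (sq_nonneg _)
    have total : (∫ s in (0:ℝ)..1, EE t s * (s^2 * A - 2*s*B + C))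
        = 2 * (A * C - B^2) := by
      have h2 : ∫ s in (0:ℝ)..1, EE t s * (s^2 * A - 2*s*B + C)
          = ∫ s in (0:ℝ)..1, (A * (s^2 * EE t s) - (2*B) * (s * EE t s) + C * EE t s) := by
        congr 1; funext s; ring
      rw [h2,
        intervalIntegral.integral_add ((hiC.const_mul A).sub (hiB.const_mul (2*B))) (hiE.const_mul C),
        intervalIntegral.integral_sub (hiC.const_mul A) (hiB.const_mul (2*B)),
        intervalIntegral.integral_const_mul, intervalIntegral.integral_const_mul,
        intervalIntegral.integral_const_mul, ← hA, ← hB, ← hC]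
      ring
    have h0 : 0 ≤ (2:ℝ) * (A * C - B^2) := by
      rw [← total]
      exact intervalIntegral.integral_nonneg (by norm_num) fun s _ => inner_nonneg s
    nlinarith
  -- put it together
  have hu : u t = A := u_eq ht
  rw [hu, hd1, hd2]
  have : A * (-(1/t) * B) + t * (A * ((1/t^2) * (B + C)) - (-(1/t) * B)^2)
      = (A * C - B^2) / t := by
    field_simp
    ring
  rw [this]
  exact div_nonneg (by linarith) ht.le
end

section
/- Let h(z) = 1 + |z|²·u²(|z|²) on ℂ \ {0}, with u(t) = (t−1)/(t·log t). Then the Gaussian curvature κ = −2·h^{-1}·∂∂̄ log h of the conformal metric h|dz|² satisfies κ(z) → −4 as |z| → 0. -/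
open Real MeasureTheory Filter Set

/-- The Gaussian curvature κ of the conformal metric (1 + t·u²(t))|dz|², t = |z|²,
expressed as a function of t, with M₁, M₂ as in the paper. -/
noncomputable def curv (t : ℝ) : ℝ :=
  -2 * ((2 * t ^ 3 * u t ^ 3 * deriv (deriv u) t + 2 * t ^ 2 * u t ^ 3 * deriv u t
          - 2 * t ^ 3 * u t ^ 2 * (deriv u t) ^ 2) +
        (u t ^ 2 + 2 * t ^ 2 * (deriv u t) ^ 2 + 2 * t ^ 2 * u t * deriv (deriv u) t
          + 6 * t * u t * deriv u t)) /
    (1 + t * u t ^ 2) ^ 3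

/-- First derivative of u on (0,1). -/
noncomputable def u1 (t : ℝ) : ℝ := (Real.log t - t + 1) / (t ^ 2 * Real.log t ^ 2)

/-- Second derivative of u on (0,1). -/
noncomputable def u2 (t : ℝ) : ℝ :=
  (-2 * Real.log t ^ 2 - 3 * Real.log t + t * Real.log t + 2 * t - 2) /
    (t ^ 3 * Real.log t ^ 3)

/-- Explicit simplified form of the curvature on (0,1). -/
noncomputable def Fc (t : ℝ) : ℝ :=
  -2 * (2 + t * ((1 + t ^ 2) * Real.log t ^ 4 + (4 - 4 * t ^ 2) * Real.log t ^ 3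
      + (4 - 8 * t + 4 * t ^ 2) * Real.log t ^ 2 + (-8 + 12 * t - 8 * t ^ 2 + 2 * t ^ 3)))
    / (t * Real.log t ^ 2 + (t - 1) ^ 2) ^ 3

lemma hasDerivAt_u {t : ℝ} (ht : t ∈ Set.Ioo (0:ℝ) 1) : HasDerivAt u (u1 t) t := by
  obtain ⟨h0, h1⟩ := ht
  have hlog : Real.log t < 0 := Real.log_neg h0 h1
  have hden : t * Real.log t ≠ 0 := mul_ne_zero h0.ne' hlog.ne
  have hf := ((hasDerivAt_id t).sub_const 1).div
      ((hasDerivAt_id t).mul (Real.hasDerivAt_log h0.ne')) hden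
  have heq : u =ᶠ[nhds t] fun s => (s - 1) / (s * Real.log s) := by
    filter_upwards [Ioo_mem_nhds h0 h1] with s hs
    exact if_neg (ne_of_lt hs.2)
  have hu := hf.congr_of_eventuallyEq heq
  refine hu.congr_deriv ?_
  unfold u1
  simp only [Pi.mul_apply, Pi.pow_apply, id_eq]
  field_simp [h0.ne', hlog.ne]
  ring

lemma deriv_u_eq {t : ℝ} (ht : t ∈ Set.Ioo (0:ℝ) 1) : deriv u t = u1 t :=
  (hasDerivAt_u ht).deriv

lemma hasDerivAt_u1 {t : ℝ} (ht : t ∈ Set.Ioo (0:ℝ) 1) : HasDerivAt u1 (u2 t) t := by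
  obtain ⟨h0, h1⟩ := ht
  have hlog : Real.log t < 0 := Real.log_neg h0 h1
  have hden : t ^ 2 * Real.log t ^ 2 ≠ 0 :=
    mul_ne_zero (pow_ne_zero _ h0.ne') (pow_ne_zero _ hlog.ne)
  have hnum : HasDerivAt (fun s : ℝ => Real.log s - s + 1) (t⁻¹ - 1) t :=
    ((Real.hasDerivAt_log h0.ne').sub (hasDerivAt_id t)).add_const 1
  have hg := (hasDerivAt_pow 2 t).mul ((Real.hasDerivAt_log h0.ne').pow 2)
  have hd := hnum.div hg hden
  show HasDerivAt (fun s : ℝ => (Real.log s - s + 1) / (s ^ 2 * Real.log s ^ 2)) (u2 t) t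
  refine hd.congr_deriv ?_
  unfold u2
  simp only [Pi.mul_apply, Pi.pow_apply, id_eq]
  field_simp [h0.ne', hlog.ne]
  ring

lemma deriv_deriv_u_eq {t : ℝ} (ht : t ∈ Set.Ioo (0:ℝ) 1) : deriv (deriv u) t = u2 t := by
  have heq : deriv u =ᶠ[nhds t] u1 := by
    filter_upwards [Ioo_mem_nhds ht.1 ht.2] with s hs
    exact deriv_u_eq hs
  rw [heq.deriv_eq]
  exact (hasDerivAt_u1 ht).deriv

set_option maxHeartbeats 2000000 in
lemma key_identity (t L : ℝ) (ht : t ≠ 0) (hL : L ≠ 0) (hD : t * L ^ 2 + (t - 1) ^ 2 ≠ 0) :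
    -2 * ((2 * t ^ 3 * ((t - 1) / (t * L)) ^ 3
            * ((-2 * L ^ 2 - 3 * L + t * L + 2 * t - 2) / (t ^ 3 * L ^ 3))
          + 2 * t ^ 2 * ((t - 1) / (t * L)) ^ 3 * ((L - t + 1) / (t ^ 2 * L ^ 2))
          - 2 * t ^ 3 * ((t - 1) / (t * L)) ^ 2 * (((L - t + 1) / (t ^ 2 * L ^ 2))) ^ 2) +
        (((t - 1) / (t * L)) ^ 2 + 2 * t ^ 2 * (((L - t + 1) / (t ^ 2 * L ^ 2))) ^ 2
          + 2 * t ^ 2 * ((t - 1) / (t * L))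
            * ((-2 * L ^ 2 - 3 * L + t * L + 2 * t - 2) / (t ^ 3 * L ^ 3))
          + 6 * t * ((t - 1) / (t * L)) * ((L - t + 1) / (t ^ 2 * L ^ 2)))) /
      (1 + t * ((t - 1) / (t * L)) ^ 2) ^ 3
    = -2 * (2 + t * ((1 + t ^ 2) * L ^ 4 + (4 - 4 * t ^ 2) * L ^ 3
        + (4 - 8 * t + 4 * t ^ 2) * L ^ 2 + (-8 + 12 * t - 8 * t ^ 2 + 2 * t ^ 3)))
      / (t * L ^ 2 + (t - 1) ^ 2) ^ 3 := by
  have hnum : (2 * t ^ 3 * ((t - 1) / (t * L)) ^ 3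
            * ((-2 * L ^ 2 - 3 * L + t * L + 2 * t - 2) / (t ^ 3 * L ^ 3))
          + 2 * t ^ 2 * ((t - 1) / (t * L)) ^ 3 * ((L - t + 1) / (t ^ 2 * L ^ 2))
          - 2 * t ^ 3 * ((t - 1) / (t * L)) ^ 2 * (((L - t + 1) / (t ^ 2 * L ^ 2))) ^ 2) +
        (((t - 1) / (t * L)) ^ 2 + 2 * t ^ 2 * (((L - t + 1) / (t ^ 2 * L ^ 2))) ^ 2
          + 2 * t ^ 2 * ((t - 1) / (t * L))
            * ((-2 * L ^ 2 - 3 * L + t * L + 2 * t - 2) / (t ^ 3 * L ^ 3))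
          + 6 * t * ((t - 1) / (t * L)) * ((L - t + 1) / (t ^ 2 * L ^ 2)))
      = (2 + t * ((1 + t ^ 2) * L ^ 4 + (4 - 4 * t ^ 2) * L ^ 3
          + (4 - 8 * t + 4 * t ^ 2) * L ^ 2 + (-8 + 12 * t - 8 * t ^ 2 + 2 * t ^ 3)))
        / (t ^ 3 * L ^ 6) := by
    field_simp
    ring
  have hden : (1 : ℝ) + t * ((t - 1) / (t * L)) ^ 2
      = (t * L ^ 2 + (t - 1) ^ 2) / (t * L ^ 2) := by
    field_simp
  rw [hnum, hden, div_pow]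
  rw [div_div_eq_mul_div]
  rw [div_eq_div_iff (by positivity) (pow_ne_zero _ hD)]
  field_simp

lemma curv_eq_Fc {t : ℝ} (ht : t ∈ Set.Ioo (0:ℝ) 1) : curv t = Fc t := by
  obtain ⟨h0, h1⟩ := ht
  have hlog : Real.log t < 0 := Real.log_neg h0 h1
  have hu : u t = (t - 1) / (t * Real.log t) := if_neg (ne_of_lt h1)
  have hD : (0:ℝ) < t * Real.log t ^ 2 + (t - 1) ^ 2 :=
    add_pos_of_nonneg_of_pos (mul_nonneg h0.le (sq_nonneg _))
      (pow_two_pos_of_ne_zero (sub_ne_zero.mpr (ne_of_lt h1)))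
  rw [curv, Fc, hu, deriv_u_eq ⟨h0, h1⟩, deriv_deriv_u_eq ⟨h0, h1⟩]
  unfold u1 u2
  exact key_identity t (Real.log t) h0.ne' hlog.ne hD.ne'

lemma tendsto_mul_log_pow (k : ℕ) :
    Filter.Tendsto (fun t : ℝ => t * Real.log t ^ k) (nhdsWithin 0 (Set.Ioi 0)) (nhds 0) := by
  have h1 : Filter.Tendsto (fun t : ℝ => -Real.log t) (nhdsWithin 0 (Set.Ioi 0)) atTop :=
    tendsto_neg_atBot_atTop.comp Real.tendsto_log_nhdsGT_zero
  have h2 : Filter.Tendsto (fun x : ℝ => (-x) ^ k * Real.exp (-x)) atTop (nhds 0) := by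
    have h3 := (Real.tendsto_pow_mul_exp_neg_atTop_nhds_zero k).const_mul ((-1:ℝ) ^ k)
    rw [mul_zero] at h3
    refine h3.congr fun x => ?_
    rw [neg_pow]
    ring
  have h4 := h2.comp h1
  refine h4.congr' ?_
  filter_upwards [self_mem_nhdsWithin] with t ht
  have ht' : (0:ℝ) < t := ht
  simp only [Function.comp_apply, neg_neg, Real.exp_log ht']
  ring

theorem curv_tendsto_neg_four :
    Filter.Tendsto curv (nhdsWithin 0 (Set.Ioi 0)) (nhds (-4)) := by
  have hIoo : Set.Ioo (0:ℝ) 1 ∈ nhdsWithin (0:ℝ) (Set.Ioi 0) :=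
    Ioo_mem_nhdsGT_of_mem ⟨le_refl 0, zero_lt_one⟩
  have heq : curv =ᶠ[nhdsWithin (0:ℝ) (Set.Ioi 0)] Fc := by
    filter_upwards [hIoo] with t ht
    exact curv_eq_Fc ht
  refine Filter.Tendsto.congr' heq.symm ?_
  have hc : ∀ f : ℝ → ℝ, Continuous f →
      Filter.Tendsto f (nhdsWithin (0:ℝ) (Set.Ioi 0)) (nhds (f 0)) :=
    fun f hf => (hf.tendsto 0).mono_left nhdsWithin_le_nhds
  -- numerator inner part tends to 0
  have hQ : Filter.Tendsto
      (fun t : ℝ => t * ((1 + t ^ 2) * Real.log t ^ 4 + (4 - 4 * t ^ 2) * Real.log t ^ 3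
        + (4 - 8 * t + 4 * t ^ 2) * Real.log t ^ 2 + (-8 + 12 * t - 8 * t ^ 2 + 2 * t ^ 3)))
      (nhdsWithin 0 (Set.Ioi 0)) (nhds 0) := by
    have e : (fun t : ℝ => t * ((1 + t ^ 2) * Real.log t ^ 4 + (4 - 4 * t ^ 2) * Real.log t ^ 3
        + (4 - 8 * t + 4 * t ^ 2) * Real.log t ^ 2 + (-8 + 12 * t - 8 * t ^ 2 + 2 * t ^ 3)))
        = fun t : ℝ => (1 + t ^ 2) * (t * Real.log t ^ 4) + (4 - 4 * t ^ 2) * (t * Real.log t ^ 3)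
          + (4 - 8 * t + 4 * t ^ 2) * (t * Real.log t ^ 2)
          + (-8 + 12 * t - 8 * t ^ 2 + 2 * t ^ 3) * (t * Real.log t ^ 0) := by
      funext t; ring
    rw [e]
    have t1 := (hc (fun t => 1 + t ^ 2) (by continuity)).mul (tendsto_mul_log_pow 4)
    have t2 := (hc (fun t => 4 - 4 * t ^ 2) (by continuity)).mul (tendsto_mul_log_pow 3)
    have t3 := (hc (fun t => 4 - 8 * t + 4 * t ^ 2) (by continuity)).mul (tendsto_mul_log_pow 2)
    have t4 := (hc (fun t => -8 + 12 * t - 8 * t ^ 2 + 2 * t ^ 3) (by continuity)).mul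
      (tendsto_mul_log_pow 0)
    have := ((t1.add t2).add t3).add t4
    simpa using this
  have hnum : Filter.Tendsto
      (fun t : ℝ => -2 * (2 + t * ((1 + t ^ 2) * Real.log t ^ 4 + (4 - 4 * t ^ 2) * Real.log t ^ 3
        + (4 - 8 * t + 4 * t ^ 2) * Real.log t ^ 2 + (-8 + 12 * t - 8 * t ^ 2 + 2 * t ^ 3))))
      (nhdsWithin 0 (Set.Ioi 0)) (nhds (-4)) := by
    have h := (hQ.const_add 2).const_mul (-2:ℝ)
    rw [add_zero, show (-2:ℝ) * 2 = -4 by norm_num] at h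
    exact Filter.Tendsto.congr (fun t => by ring) h
  have hden : Filter.Tendsto (fun t : ℝ => (t * Real.log t ^ 2 + (t - 1) ^ 2) ^ 3)
      (nhdsWithin 0 (Set.Ioi 0)) (nhds 1) := by
    have hsum := (tendsto_mul_log_pow 2).add (hc (fun t => (t - 1) ^ 2) (by continuity))
    norm_num at hsum
    have h3 := hsum.pow 3
    norm_num at h3
    exact h3
  have hfin := hnum.div hden one_ne_zero
  rw [show Fc = fun t : ℝ => -2 * (2 + t * ((1 + t ^ 2) * Real.log t ^ 4
      + (4 - 4 * t ^ 2) * Real.log t ^ 3 + (4 - 8 * t + 4 * t ^ 2) * Real.log t ^ 2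
      + (-8 + 12 * t - 8 * t ^ 2 + 2 * t ^ 3)))
    / (t * Real.log t ^ 2 + (t - 1) ^ 2) ^ 3 from rfl]
  simpa [Pi.div_def] using hfin
end
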